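/- Let T̂ : 𝔽₂ⁿ → 𝔽₂ⁿ be a map that preserves both the Hamming distance and the Hamming weight (|T̂ v| = |v| for all v). Then for every list of pairwise distinct unity vectors e₁, ..., e_ℓ ∈ 𝔽₂ⁿ (0 ≤ ℓ ≤ n), the equality T̂(e₁ + ⋯ + e_ℓ) = T̂(e₁) + ⋯ + T̂(e_ℓ) holds. -/

import Mathlib

open Finset

private lemma zmod2_one {x : ZMod 2} (h : x ≠ 0) : x = 1 := by revert h; revert x; decide

private lemma zmod2_of_iff {x y : ZMod 2} (h : x ≠ 0 ↔ y ≠ 0) : x = y := by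
  revert h; revert x y; decide

private lemma zmod2_add_self (x : ZMod 2) : x + x = 0 := by revert x; decide

private lemma zmod2_sub_one (x : ZMod 2) : x - 1 = x + 1 := by revert x; decide

private lemma zmod2_add_comm_sub (x y : ZMod 2) : x + y = y - x := by revert x y; decide

private lemma unity_form {n : ℕ} {e : Fin n → ZMod 2} (h : hammingNorm e = 1) :
    ∃ j, e = Pi.single j 1 := by
  rw [hammingNorm, Finset.card_eq_one] at h
  obtain ⟨j, hj⟩ := h
  have hmem : ∀ i, e i ≠ 0 ↔ i = j := by
    intro i
    constructor
    · intro hi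
      have : i ∈ ({i | e i ≠ 0} : Finset (Fin n)) := by
        simp [Finset.mem_filter, hi]
      rw [hj, Finset.mem_singleton] at this
      exact this
    · intro hi
      subst hi
      have : i ∈ ({i | e i ≠ 0} : Finset (Fin n)) := by
        rw [hj]; exact Finset.mem_singleton_self _
      simpa using this
  refine ⟨j, funext fun i => ?_⟩
  by_cases hij : i = j
  · subst hij
    have h1 : e i = 1 := zmod2_one ((hmem i).mpr rfl)
    simp [h1]
  · have : e i = 0 := by
      by_contra h0
      exact hij ((hmem i).mp h0)
    simp [this, Pi.single_eq_of_ne hij]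

private lemma sub_single_eq {n : ℕ} (v : Fin n → ZMod 2) (j : Fin n) :
    v - Pi.single j 1 = Function.update v j (v j + 1) := by
  funext i
  by_cases h : i = j
  · subst h
    simp [zmod2_sub_one]
  · simp [Function.update_of_ne h, Pi.single_eq_of_ne h]

private lemma norm_sub_single_of_ne {n : ℕ} {v : Fin n → ZMod 2} {j : Fin n} (h : v j ≠ 0) :
    hammingNorm (v - Pi.single j 1) + 1 = hammingNorm v := by
  have hv1 : v j = 1 := zmod2_one h
  rw [sub_single_eq]
  simp only [hammingNorm]
  have hfe : (Finset.filter (fun i => Function.update v j (v j + 1) i ≠ 0) Finset.univ)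
      = (Finset.filter (fun i => v i ≠ 0) Finset.univ).erase j := by
    ext i
    by_cases hij : i = j
    · subst hij
      simp [hv1, show (1 : ZMod 2) + 1 = 0 by decide]
    · simp [Function.update_of_ne hij, hij]
  have hjmem : j ∈ Finset.filter (fun i => v i ≠ 0) Finset.univ := by simp [h]
  rw [hfe, Finset.card_erase_add_one hjmem]

private lemma norm_sub_single_of_eq {n : ℕ} {v : Fin n → ZMod 2} {j : Fin n} (h : v j = 0) :
    hammingNorm (v - Pi.single j 1) = hammingNorm v + 1 := by
  rw [sub_single_eq]
  simp only [hammingNorm]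
  have hfe : (Finset.filter (fun i => Function.update v j (v j + 1) i ≠ 0) Finset.univ)
      = insert j (Finset.filter (fun i => v i ≠ 0) Finset.univ) := by
    ext i
    by_cases hij : i = j
    · subst hij
      simp [h, show (0 : ZMod 2) + 1 ≠ 0 by decide]
    · simp [Function.update_of_ne hij, hij]
  have hjnmem : j ∉ Finset.filter (fun i => v i ≠ 0) Finset.univ := by simp [h]
  rw [hfe, Finset.card_insert_of_notMem hjnmem, Nat.add_comm]

private lemma sum_apply_ne {n : ℕ} (l : List (Fin n → ZMod 2)) (i : Fin n)
    (h : l.sum i ≠ 0) : ∃ e ∈ l, e i ≠ 0 := by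
  induction l with
  | nil => simp at h
  | cons a t ih =>
    rw [List.sum_cons] at h
    by_cases ha : a i ≠ 0
    · exact ⟨a, List.mem_cons_self, ha⟩
    · push_neg at ha
      have ht : t.sum i ≠ 0 := by
        intro h0
        apply h
        simp [Pi.add_apply, ha, h0]
      obtain ⟨e, he, h'⟩ := ih ht
      exact ⟨e, List.mem_cons_of_mem _ he, h'⟩

private lemma sum_unity_norm {n : ℕ} (l : List (Fin n → ZMod 2))
    (hu : ∀ e ∈ l, hammingNorm e = 1) (hd : l.Pairwise (· ≠ ·)) :
    hammingNorm l.sum = l.length ∧ ∀ e ∈ l, ∀ i, e i ≠ 0 → l.sum i ≠ 0 := by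
  induction l with
  | nil => simp
  | cons a t ih =>
    obtain ⟨hd1, hd2⟩ := List.pairwise_cons.mp hd
    obtain ⟨hnorm, hdom⟩ := ih (fun e he => hu e (List.mem_cons_of_mem _ he)) hd2
    obtain ⟨j, hja⟩ := unity_form (hu a (List.mem_cons_self))
    have haj : a j = 1 := by rw [hja]; simp
    have hsj : t.sum j = 0 := by
      by_contra h
      obtain ⟨e, he, hej⟩ := sum_apply_ne t j h
      obtain ⟨j', hje⟩ := unity_form (hu e (List.mem_cons_of_mem _ he))
      have hjj : j' = j := by
        by_contra hne
        rw [hje] at hej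
        exact hej (Pi.single_eq_of_ne (fun hc => hne hc.symm) 1)
      exact hd1 e he (by rw [hja, hje, hjj])
    have hsum : (a :: t).sum = t.sum - Pi.single j 1 := by
      rw [List.sum_cons, hja]
      funext i
      exact zmod2_add_comm_sub _ _
    constructor
    · rw [hsum, List.length_cons, norm_sub_single_of_eq hsj, hnorm]
    · intro e he i hei
      rcases List.mem_cons.mp he with rfl | het
      · have hij : i = j := by
          by_contra hne
          rw [hja] at hei
          exact hei (Pi.single_eq_of_ne hne 1)
        subst hij
        rw [List.sum_cons]
        simp [Pi.add_apply, haj, hsj, show (1 : ZMod 2) + 0 ≠ 0 by decide]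
      · have hti : t.sum i ≠ 0 := hdom e het i hei
        have hai : a i = 0 := by
          by_contra h0
          have hij : i = j := by
            by_contra hne
            rw [hja] at h0
            exact h0 (Pi.single_eq_of_ne hne 1)
          subst hij
          exact hti hsj
        rw [List.sum_cons]
        simpa [Pi.add_apply, hai] using hti

theorem hat_T_additive_on_distinct_unity_vectors
    (n : ℕ) (T : (Fin n → ZMod 2) → (Fin n → ZMod 2))
    (hdist : ∀ v v' : Fin n → ZMod 2, hammingDist (T v) (T v') = hammingDist v v')
    (hwt : ∀ v : Fin n → ZMod 2, hammingNorm (T v) = hammingNorm v)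
    (l : List (Fin n → ZMod 2))
    (hunity : ∀ e ∈ l, hammingNorm e = 1)
    (hdistinct : l.Pairwise (· ≠ ·))
    (hlen : l.length ≤ n) :
    T l.sum = (l.map T).sum := by
  classical
  obtain ⟨hns, hdom⟩ := sum_unity_norm l hunity hdistinct
  have hu' : ∀ e' ∈ l.map T, hammingNorm e' = 1 := by
    intro e' he'
    obtain ⟨e, he, rfl⟩ := List.mem_map.mp he'
    rw [hwt]; exact hunity e he
  have hd' : (l.map T).Pairwise (· ≠ ·) := by
    refine List.Pairwise.map T (fun a b hab hTab => hab ?_) hdistinct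
    have := hdist a b
    rw [hTab, hammingDist_self] at this
    exact eq_of_hammingDist_eq_zero this.symm
  obtain ⟨hns', _⟩ := sum_unity_norm (l.map T) hu' hd'
  have key : ∀ i, (l.map T).sum i ≠ 0 → T l.sum i ≠ 0 := by
    intro i hi
    obtain ⟨e', he', hei⟩ := sum_apply_ne _ i hi
    obtain ⟨e, he, rfl⟩ := List.mem_map.mp he'
    obtain ⟨j', hTe⟩ := unity_form (by rw [hwt]; exact hunity e he)
    have hij : i = j' := by
      by_contra hne
      rw [hTe] at hei
      exact hei (Pi.single_eq_of_ne hne 1)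
    subst hij
    obtain ⟨j, hej⟩ := unity_form (hunity e he)
    have hsj : l.sum j ≠ 0 := hdom e he j (by rw [hej]; simp)
    have hd1 : hammingDist l.sum e + 1 = l.length := by
      rw [hammingDist_comm, hammingDist_eq_hammingNorm, neg_add_eq_sub, hej, norm_sub_single_of_ne hsj, hns]
    by_cases hTsi : T l.sum i = 0
    · exfalso
      have h2 : hammingDist (T l.sum) (T e) = l.length + 1 := by
        rw [hammingDist_comm, hammingDist_eq_hammingNorm, neg_add_eq_sub, hTe, norm_sub_single_of_eq hTsi, hwt, hns]
      rw [hdist] at h2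
      omega
    · exact hTsi
  have hsub : ({i | (l.map T).sum i ≠ 0} : Finset (Fin n))
      ⊆ ({i | T l.sum i ≠ 0} : Finset (Fin n)) := by
    intro i hi
    simp only [Finset.mem_filter, Finset.mem_univ, true_and] at hi ⊢
    exact key i hi
  have hcard : ({i | T l.sum i ≠ 0} : Finset (Fin n)).card
      ≤ ({i | (l.map T).sum i ≠ 0} : Finset (Fin n)).card := by
    have h1 : ({i | T l.sum i ≠ 0} : Finset (Fin n)).card = l.length := by
      rw [← hammingNorm, hwt, hns]
    have h2 : ({i | (l.map T).sum i ≠ 0} : Finset (Fin n)).card = l.length := by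
      rw [← hammingNorm, hns', List.length_map]
    omega
  have heq := Finset.eq_of_subset_of_card_le hsub hcard
  funext i
  have hmem : (T l.sum i ≠ 0) ↔ ((l.map T).sum i ≠ 0) := by
    constructor
    · intro h
      have hi : i ∈ ({i | T l.sum i ≠ 0} : Finset (Fin n)) := by simp [h]
      rw [← heq] at hi
      simpa using hi
    · exact key i
  exact zmod2_of_iff hmem
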